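/- arXiv:2210.10912 — 2 statements merged into one kernel-verified Lean document; each statement's English description precedes it below -/
import Mathlib

section
/- On the characteristic set Σ = {r²τ² = ξ² + (Aτ+η)²} with τ ≠ 0 and r > |A|, the coefficient of ∂_t in the rescaled b-Hamilton vector field, namely r²τ - A(Aτ+η), has the same sign as τ. Consequently t is monotone along null bicharacteristics remaining in the region r > |A|. -/
/-- On the characteristic set with `r > |A|`, the coefficient `r²τ - A(Aτ+η)` of `∂_t`
in the rescaled b-Hamilton vector field has the same sign as `τ`. -/
theorem t_monotone_outside_string (A r τ ξ η : ℝ)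
    (hSigma : r^2 * τ^2 = ξ^2 + (A * τ + η)^2) (hr : |A| < r) :
    (0 < τ → 0 < r^2 * τ - A * (A * τ + η)) ∧
    (τ < 0 → r^2 * τ - A * (A * τ + η) < 0) := by
  have hA : A ≤ |A| := le_abs_self A
  have hA' : -A ≤ |A| := neg_le_abs A
  have h0 : (0:ℝ) ≤ |A| := abs_nonneg A
  have hsq : (A * τ + η)^2 ≤ r^2 * τ^2 := by nlinarith [sq_nonneg ξ]
  have hrt : (0:ℝ) ≤ r * |τ| := mul_nonneg (h0.trans_lt hr).le (abs_nonneg τ)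
  have hsq' : (A * τ + η)^2 ≤ (r * |τ|)^2 := by rw [mul_pow, sq_abs]; exact hsq
  have habs : |A * τ + η| ≤ r * |τ| := abs_le.mpr
    ⟨by nlinarith [sq_nonneg (A * τ + η + r * |τ|)],
     by nlinarith [sq_nonneg (A * τ + η - r * |τ|)]⟩
  constructor <;> intro hτ
  · have h1 : A * (A * τ + η) ≤ |A| * |A * τ + η| := by
      calc A * (A * τ + η) ≤ |A * (A * τ + η)| := le_abs_self _
        _ = |A| * |A * τ + η| := abs_mul _ _
    have h2 : |A| * |A * τ + η| ≤ |A| * (r * τ) := by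
      have : r * |τ| = r * τ := by rw [abs_of_pos hτ]
      exact mul_le_mul_of_nonneg_left (this ▸ habs) h0
    nlinarith [mul_pos (mul_pos (h0.trans_lt hr) hτ) (sub_pos.2 hr)]
  · have h1 : -(A * (A * τ + η)) ≤ |A| * |A * τ + η| := by
      calc -(A * (A * τ + η)) ≤ |A * (A * τ + η)| := neg_le_abs _
        _ = |A| * |A * τ + η| := abs_mul _ _
    have h2 : |A| * |A * τ + η| ≤ |A| * (r * -τ) := by
      have : r * |τ| = r * -τ := by rw [abs_of_neg hτ]
      exact mul_le_mul_of_nonneg_left (this ▸ habs) h0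
    nlinarith [mul_pos (mul_pos (h0.trans_lt hr) (neg_pos.2 hτ)) (sub_pos.2 hr)]
end

section
/- Let γ(s) = (x₀ + s·v, t₀ + s) be a null geodesic in 2+1 Minkowski space with |v| = 1, written in the coordinates (x, t') with t' = t - Aφ and φ the polar angle of x ∈ ℝ² \ {0}. If the geodesic is parametrized so that t(s) → +∞ as s → +∞, then for all s, t(s) - t(0) ≥ -|A|π. (The total variation of the polar angle φ along a line in the plane not through the origin is at most π.) -/
/-- Along a null geodesic oriented so that `t(s) → +∞` as `s → +∞`, with
`t = t' + Aφ`, `t'(s) = t'(0) + s`, and the total variation of the polar angle `φ`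
along the line bounded by `π`, one has `t(s) - t(0) ≥ -|A|π` for all `s ≥ 0`. -/
theorem time_delay_bound (A : ℝ) (t t' φ : ℝ → ℝ)
    (ht : ∀ s, t s = t' s + A * φ s)
    (ht' : ∀ s, t' s = t' 0 + s)
    (hφ : ∀ s u, |φ s - φ u| ≤ Real.pi) :
    ∀ s, 0 ≤ s → -( |A| * Real.pi) ≤ t s - t 0 := by
  intro s hs
  have h1 : t s - t 0 = s + A * (φ s - φ 0) := by
    rw [ht s, ht 0, ht' s]; ring
  have h2 : |A * (φ s - φ 0)| ≤ |A| * Real.pi := by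
    rw [abs_mul]
    exact mul_le_mul_of_nonneg_left (hφ s 0) (abs_nonneg A)
  have := neg_abs_le (A * (φ s - φ 0))
  linarith
end
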